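/- Let G be a nontrivial finite group and W = G ≀ Cₙ for an integer n ≥ 2. If |Z(G)| ≥ 2 and (|Z(G)| > 2 or n > 2), then W does not achieve the maximal Chermak-Delgado measure among subgroups of W, i.e., W ∉ CD(W). -/

import Mathlib

/-- The Chermak-Delgado measure of a subgroup `H` of `G`: `|H| * |C_G(H)|`. -/
noncomputable def cdMeasure {G : Type*} [Group G] (H : Subgroup G) : ℕ :=
  Nat.card H * Nat.card (Subgroup.centralizer (H : Set G))

/-- The Chermak-Delgado lattice: subgroups of maximal Chermak-Delgado measure. -/
def CD (G : Type*) [Group G] : Set (Subgroup G) :=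
  {H : Subgroup G | ∀ K : Subgroup G, cdMeasure K ≤ cdMeasure H}

/-- The automorphism of the base group `ZMod n → G` shifting coordinates by `k`. -/
def shiftAut (n : ℕ) (G : Type*) [Group G] (k : ZMod n) : MulAut (ZMod n → G) where
  toFun f := fun ω => f (ω + k)
  invFun f := fun ω => f (ω - k)
  left_inv f := by funext ω; simp
  right_inv f := by funext ω; simp
  map_mul' f g := rfl

/-- The shift action of the cyclic group `Cₙ` on the base group `ZMod n → G`. -/
def shiftHom (n : ℕ) (G : Type*) [Group G] :
    Multiplicative (ZMod n) →* MulAut (ZMod n → G) where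
  toFun k := shiftAut n G (Multiplicative.toAdd k)
  map_one' := by
    ext f ω
    simp [shiftAut]
  map_mul' a b := by
    ext f ω
    show f _ = f _
    congr 1
    simp [toAdd_mul, add_assoc]

/-- The wreath product `G ≀ Cₙ`, with `Cₙ` cyclically permuting the `n` copies of `G`. -/
abbrev Wreath (n : ℕ) (G : Type*) [Group G] :=
  SemidirectProduct (ZMod n → G) (Multiplicative (ZMod n)) (shiftHom n G)

/-- The base group `B = Gⁿ` of the wreath product `G ≀ Cₙ`. -/
def baseSubgroup (n : ℕ) (G : Type*) [Group G] : Subgroup (Wreath n G) :=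
  (SemidirectProduct.inl : (ZMod n → G) →* Wreath n G).range

private lemma aux_pow_lt {z m : ℕ} (hz : 2 ≤ z) (hm : 1 ≤ m) (h : 3 ≤ z ∨ 2 ≤ m) :
    m + 1 < z ^ m := by
  have h2 : ∀ k : ℕ, 2 ≤ k → k + 1 < 2 ^ k := by
    intro k hk
    induction k with
    | zero => omega
    | succ k ih =>
      rcases Nat.lt_or_ge k 2 with h' | h'
      · interval_cases k
        · omega
        · norm_num
      · have h1 := ih h'
        have h2 : (1 : ℕ) ≤ 2 ^ k := Nat.one_le_two_pow
        have : 2 ^ (k + 1) = 2 ^ k + 2 ^ k := by ring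
        omega
  rcases h with h | h
  · have h1 : m + 1 ≤ 2 ^ m := Nat.lt_two_pow_self
    have h2 : 2 ^ m < z ^ m := Nat.pow_lt_pow_left (by omega) (by omega)
    omega
  · have h1 : m + 1 < 2 ^ m := h2 m h
    have h3 : 2 ^ m ≤ z ^ m := Nat.pow_le_pow_left hz m
    omega

theorem stmt_19 {G : Type*} [Group G] [Finite G] [Nontrivial G] (n : ℕ) (hn : 2 ≤ n)
    (hz : 2 ≤ Nat.card (Subgroup.center G))
    (h : 2 < Nat.card (Subgroup.center G) ∨ 2 < n) :
    (⊤ : Subgroup (Wreath n G)) ∉ CD (Wreath n G) := by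
  haveI : NeZero n := ⟨by omega⟩
  set g := Nat.card G with hg
  set z := Nat.card (Subgroup.center G) with hzdef
  -- cardinality equiv
  have e : Wreath n G ≃ (ZMod n → G) × Multiplicative (ZMod n) :=
    ⟨fun x => (x.left, x.right), fun p => ⟨p.1, p.2⟩, fun x => rfl, fun p => rfl⟩
  haveI : Finite (Wreath n G) := Finite.of_equiv _ e.symm
  have cardW : Nat.card (Wreath n G) = g ^ n * n := by
    rw [Nat.card_congr e, Nat.card_prod, Nat.card_fun, Nat.card_zmod,
      Nat.card_congr (Multiplicative.toAdd (α := ZMod n)), Nat.card_zmod]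
  -- structure of central elements
  have key : ∀ w : Wreath n G, w ∈ Subgroup.center (Wreath n G) →
      w.right = 1 ∧ (∀ ω, w.left ω = w.left 0) ∧ w.left 0 ∈ Subgroup.center G := by
    intro w hw
    rw [Subgroup.mem_center_iff] at hw
    -- commuting with inl elements
    have hA : ∀ f : ZMod n → G, ∀ ω : ZMod n,
        f ω * w.left ω = w.left ω * f (ω + Multiplicative.toAdd w.right) := by
      intro f ω
      have := hw (SemidirectProduct.inl f)
      have hl := congrArg SemidirectProduct.left this
      rw [SemidirectProduct.mul_left, SemidirectProduct.mul_left, SemidirectProduct.left_inl,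
        SemidirectProduct.right_inl] at hl
      simp [SemidirectProduct.mul_left, shiftHom, shiftAut] at hl
      exact congrFun hl ω
    -- right component is trivial
    have hr : w.right = 1 := by
      by_contra hr
      have hk : Multiplicative.toAdd w.right ≠ 0 := by
        intro h0
        exact hr (by simpa using congrArg Multiplicative.ofAdd h0)
      obtain ⟨a, ha⟩ := exists_ne (1 : G)
      have := hA (Pi.mulSingle 0 a) 0
      rw [Pi.mulSingle_eq_same, Pi.mulSingle_eq_of_ne (by simpa using hk)] at this
      simp at this
      exact ha this
    have hA' : ∀ f : ZMod n → G, ∀ ω : ZMod n, f ω * w.left ω = w.left ω * f ω := by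
      intro f ω
      have := hA f ω
      rw [hr] at this
      simpa using this
    -- each value is central
    have hcen : ∀ ω, w.left ω ∈ Subgroup.center G := by
      intro ω
      rw [Subgroup.mem_center_iff]
      intro a
      simpa using hA' (Pi.mulSingle ω a) ω
    -- constancy: commuting with inr elements
    have hconst : ∀ ω, w.left ω = w.left 0 := by
      intro ω
      have := hw (SemidirectProduct.inr (Multiplicative.ofAdd ω))
      have hl := congrArg SemidirectProduct.left this
      rw [SemidirectProduct.mul_left, SemidirectProduct.mul_left, SemidirectProduct.left_inr,
        SemidirectProduct.right_inr] at hl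
      simp [SemidirectProduct.mul_left, shiftHom, shiftAut] at hl
      have := congrFun hl 0
      simpa using this
    exact ⟨hr, hconst, hcen 0⟩
  -- bound on |Z(W)|
  have hZ : Nat.card (Subgroup.center (Wreath n G)) ≤ z := by
    apply Nat.card_le_card_of_injective
      (f := fun w : Subgroup.center (Wreath n G) =>
        (⟨(w : Wreath n G).left 0, (key _ w.2).2.2⟩ : Subgroup.center G))
    intro w1 w2 h12
    have h12' : (w1 : Wreath n G).left 0 = (w2 : Wreath n G).left 0 :=
      congrArg Subtype.val h12
    apply Subtype.ext
    apply SemidirectProduct.ext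
    · funext ω
      rw [(key _ w1.2).2.1 ω, (key _ w2.2).2.1 ω, h12']
    · rw [(key _ w1.2).1, (key _ w2.2).1]
  -- lower bound on |C_W(B)|
  have hC : z ^ n ≤ Nat.card (Subgroup.centralizer ((baseSubgroup n G : Subgroup (Wreath n G)) : Set (Wreath n G))) := by
    have hmem : ∀ f : ZMod n → Subgroup.center G,
        SemidirectProduct.inl (φ := shiftHom n G) (fun ω => (f ω : G)) ∈
          Subgroup.centralizer ((baseSubgroup n G : Subgroup (Wreath n G)) : Set (Wreath n G)) := by
      intro f
      rw [Subgroup.mem_centralizer_iff]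
      rintro x ⟨gx, rfl⟩
      rw [← map_mul, ← map_mul]
      congr 1
      funext ω
      show gx ω * (f ω : G) = (f ω : G) * gx ω
      exact Subgroup.mem_center_iff.mp (f ω).2 (gx ω)
    have hinj : Function.Injective (fun f : ZMod n → Subgroup.center G =>
        (⟨SemidirectProduct.inl (fun ω => (f ω : G)), hmem f⟩ :
          Subgroup.centralizer ((baseSubgroup n G : Subgroup (Wreath n G)) : Set (Wreath n G)))) := by
      intro f1 f2 h12
      have h12' : SemidirectProduct.inl (φ := shiftHom n G) (fun ω => (f1 ω : G)) =
          SemidirectProduct.inl (fun ω => (f2 ω : G)) := congrArg Subtype.val h12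
      have h12'' := congrArg SemidirectProduct.left h12'
      funext ω
      exact Subtype.ext (congrFun h12'' ω)
    calc z ^ n = Nat.card (ZMod n → Subgroup.center G) := by
          rw [Nat.card_fun, Nat.card_zmod]
      _ ≤ _ := Nat.card_le_card_of_injective _ hinj
  -- card of the base subgroup
  have cardB : Nat.card (baseSubgroup n G) = g ^ n := by
    unfold baseSubgroup
    rw [← Nat.card_congr (MonoidHom.ofInjective
      (SemidirectProduct.inl_injective (φ := shiftHom n G))).toEquiv,
      Nat.card_fun, Nat.card_zmod]
  -- measures
  have htop : cdMeasure (⊤ : Subgroup (Wreath n G)) ≤ g ^ n * n * z := by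
    unfold cdMeasure
    rw [Subgroup.coe_top, Subgroup.centralizer_univ]
    have h1 : Nat.card (⊤ : Subgroup (Wreath n G)) = g ^ n * n := by
      rw [Nat.card_congr Subgroup.topEquiv.toEquiv, cardW]
    rw [h1]
    exact Nat.mul_le_mul_left _ hZ
  have hB : g ^ n * z ^ n ≤ cdMeasure (baseSubgroup n G) := by
    unfold cdMeasure
    exact Nat.mul_le_mul cardB.ge hC
  -- final numeric comparison
  intro hCD
  have hle := hCD (baseSubgroup n G)
  have hgpos : 0 < g ^ n := Nat.pow_pos Nat.card_pos
  have hnum : n * z < z ^ n := by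
    have h1 : n < z ^ (n - 1) := by
      have := aux_pow_lt (z := z) (m := n - 1) hz (by omega) (by omega)
      omega
    have h2 : z ^ (n - 1) * z = z ^ n := by
      rw [← pow_succ]
      congr 1
      omega
    calc n * z < z ^ (n - 1) * z := (Nat.mul_lt_mul_right (by omega : 0 < z)).mpr h1
      _ = z ^ n := h2
  have : g ^ n * n * z < g ^ n * z ^ n := by
    rw [Nat.mul_assoc]
    exact (Nat.mul_lt_mul_left hgpos).mpr hnum
  omega
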